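/- For all natural numbers i, j, n with i, j < 2^(n+1): binom(2(2^(n+1)+i)+1, 2^(n+1)+i-j) ≡ binom(2(2^(n+1)+i)+1, (2^(n+1)+i) - (2^(n+2)-1-j)) (mod 2). -/
import Mathlib

/-- Binomial coefficient with an integer lower index, vanishing for negative lower index. -/
def chooseZ (n : ℕ) (m : ℤ) : ℤ := if m < 0 then 0 else (n.choose m.toNat : ℤ)

private lemma lucas2 (a b : ℕ) :
    Nat.choose a b ≡ Nat.choose (a % 2) (b % 2) * Nat.choose (a / 2) (b / 2) [MOD 2] := by
  haveI : Fact (Nat.Prime 2) := ⟨Nat.prime_two⟩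
  exact Choose.choose_modEq_choose_mod_mul_choose_div_nat

private lemma key1 : ∀ k r b : ℕ, r < 2 ^ k → b < 2 ^ k →
    Nat.choose (2 ^ k + r) b ≡ Nat.choose r b [MOD 2] := by
  intro k
  induction k with
  | zero =>
    intro r b hr hb
    interval_cases r
    interval_cases b
    rfl
  | succ k ih =>
    intro r b hr hb
    have h1 := lucas2 (2 ^ (k + 1) + r) b
    have h2 := lucas2 r b
    have e1 : (2 ^ (k + 1) + r) % 2 = r % 2 := by rw [pow_succ]; omega
    have e2 : (2 ^ (k + 1) + r) / 2 = 2 ^ k + r / 2 := by rw [pow_succ]; omega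
    rw [e1, e2] at h1
    have h3 := ih (r / 2) (b / 2) (by rw [pow_succ] at hr; omega) (by rw [pow_succ] at hb; omega)
    exact h1.trans ((Nat.ModEq.mul_left _ h3).trans h2.symm)

theorem choose_vertical_mirror_mod_two (n i j : ℕ) (hi : i < 2 ^ (n + 1)) (hj : j < 2 ^ (n + 1)) :
    chooseZ (2 * (2 ^ (n + 1) + i) + 1) ((2 ^ (n + 1) + i : ℤ) - j) ≡
      chooseZ (2 * (2 ^ (n + 1) + i) + 1)
        ((2 ^ (n + 1) + i : ℤ) - (2 ^ (n + 2) - 1 - j)) [ZMOD 2] := by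
  obtain ⟨x, hx⟩ : ∃ x, 2 ^ (n + 1) = x := ⟨_, rfl⟩
  have hx1 : ((2 : ℤ)) ^ (n + 1) = (x : ℤ) := by rw [← hx]; push_cast; ring
  have hx2 : ((2 : ℤ)) ^ (n + 2) = 2 * (x : ℤ) := by rw [← hx]; push_cast; ring
  rw [hx] at hi hj
  rw [hx, hx1, hx2]
  have etop : 2 * (x + i) + 1 = 2 ^ (n + 2) + (2 * i + 1) := by
    rw [pow_succ, hx]; ring
  have h2i : 2 * i + 1 < 2 ^ (n + 2) := by rw [pow_succ, hx]; omega
  have hpow : x + i < 2 ^ (n + 2) := by rw [pow_succ, hx]; omega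
  have ea : ((x : ℤ) + i) - j = ((x + i - j : ℕ) : ℤ) := by
    rw [Nat.cast_sub (by omega)]; push_cast; ring
  have hL : Nat.choose (2 * (x + i) + 1) (x + i - j) ≡
      Nat.choose (2 * i + 1) (x + i - j) [MOD 2] := by
    rw [etop]; exact key1 (n + 2) _ _ h2i (by omega)
  rw [chooseZ, if_neg (by rw [ea]; exact not_lt.2 (Int.natCast_nonneg _)), ea, Int.toNat_natCast]
  by_cases hcase : x ≤ i + j + 1
  · have eb : ((x : ℤ) + i) - (2 * x - 1 - j) = ((i + j + 1 - x : ℕ) : ℤ) := by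
      rw [Nat.cast_sub (by omega)]; push_cast; ring
    rw [chooseZ, if_neg (by rw [eb]; exact not_lt.2 (Int.natCast_nonneg _)), eb,
      Int.toNat_natCast]
    have hR : Nat.choose (2 * (x + i) + 1) (i + j + 1 - x) ≡
        Nat.choose (2 * i + 1) (i + j + 1 - x) [MOD 2] := by
      rw [etop]; exact key1 (n + 2) _ _ h2i (by omega)
    have hsym : Nat.choose (2 * i + 1) (x + i - j)
        = Nat.choose (2 * i + 1) (i + j + 1 - x) := by
      have h1 : i + j + 1 - x = (2 * i + 1) - (x + i - j) := by omega
      rw [h1, Nat.choose_symm (by omega)]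
    have h := hL.trans (hsym ▸ hR.symm)
    exact_mod_cast Int.natCast_modEq_iff.mpr h
  · rw [chooseZ, if_pos (by omega)]
    have hzero : Nat.choose (2 * i + 1) (x + i - j) = 0 :=
      Nat.choose_eq_zero_of_lt (by omega)
    have h : Nat.choose (2 * (x + i) + 1) (x + i - j) ≡ 0 [MOD 2] := hzero ▸ hL
    exact_mod_cast Int.natCast_modEq_iff.mpr h
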